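/- Every derivation of the Lie algebra R_{𝐧₁}(0) is inner; together with the triviality of the center, R_{𝐧₁}(0) is a complete Lie algebra, i.e., H¹(R_{𝐧₁}(0), R_{𝐧₁}(0)) = 0 and Center = 0. -/

import Mathlib

def cc (i j : ℕ) : ℤ :=
  if ((i : ℤ) - j) % 3 = 1 then 1 else if ((i : ℤ) - j) % 3 = 2 then -1 else 0

def lamN (k : ℕ) : ℕ := if k < 2 then 0 else (k - 2) / 3 + (if (k - 2) % 3 = 1 then 0 else 1)

def muZ (k : ℕ) : ℤ := if k < 2 then 0 else
  if (k - 2) % 3 = 0 then -1 else if (k - 2) % 3 = 1 then 1 else 0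

lemma lamN_32 (i : ℕ) : lamN (3 * i + 2) = i + 1 := by simp only [lamN]; split_ifs <;> omega
lemma lamN_33 (i : ℕ) : lamN (3 * i + 3) = i := by simp only [lamN]; split_ifs <;> omega
lemma lamN_34 (i : ℕ) : lamN (3 * i + 4) = i + 1 := by simp only [lamN]; split_ifs <;> omega
lemma muZ_32 (i : ℕ) : muZ (3 * i + 2) = -1 := by simp only [muZ]; split_ifs <;> omega
lemma muZ_33 (i : ℕ) : muZ (3 * i + 3) = 1 := by simp only [muZ]; split_ifs <;> omega
lemma muZ_34 (i : ℕ) : muZ (3 * i + 4) = 0 := by simp only [muZ]; split_ifs <;> omega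

lemma weight_inj {k m : ℕ} (hk : 2 ≤ k) (hm : 2 ≤ m) (hl : lamN k = lamN m)
    (hmu : muZ k = muZ m) : k = m := by
  simp only [lamN, muZ] at hl hmu; split_ifs at hl hmu <;> omega

lemma weight_ne (k : ℕ) (hk : 2 ≤ k) : lamN k ≠ 0 ∨ muZ k ≠ 0 := by
  simp only [lamN, muZ]; split_ifs <;> omega

lemma wadd2 (k : ℕ) (h4 : 4 ≤ k) (h3 : k % 3 ≠ 0) :
    lamN k = 1 + lamN (k - 1) ∧ muZ k = -1 + muZ (k - 1) := by
  simp only [lamN, muZ]; split_ifs <;> omega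

lemma wadd3 (k : ℕ) (h4 : 4 ≤ k) (h3 : k % 3 = 0) :
    lamN k = lamN (k - 2) ∧ muZ k = 1 + muZ (k - 2) := by
  simp only [lamN, muZ]; split_ifs <;> omega

theorem statement15 (L : Type*) [LieRing L] [LieAlgebra ℂ L] (b : Module.Basis ℕ ℂ L)
    (h1 : ∀ i j : ℕ, ⁅b (i + 2), b (j + 2)⁆ = (cc (i + 1) (j + 1) : ℂ) • b (i + j + 3))
    (h2 : ∀ i : ℕ, ⁅b (3 * i + 2), b 0⁆ = ((i : ℂ) + 1) • b (3 * i + 2))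
    (h3 : ∀ i : ℕ, ⁅b (3 * i + 3), b 0⁆ = (i : ℂ) • b (3 * i + 3))
    (h4 : ∀ i : ℕ, ⁅b (3 * i + 4), b 0⁆ = ((i : ℂ) + 1) • b (3 * i + 4))
    (h5 : ∀ i : ℕ, ⁅b (3 * i + 2), b 1⁆ = -b (3 * i + 2))
    (h6 : ∀ i : ℕ, ⁅b (3 * i + 3), b 1⁆ = b (3 * i + 3))
    (h7 : ∀ i : ℕ, ⁅b (3 * i + 4), b 1⁆ = 0)
    (h8 : ⁅b 0, b 1⁆ = 0)
    : LieAlgebra.center ℂ L = ⊥ ∧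
      ∀ d : LieDerivation ℂ L L, ∃ a : L, ∀ w : L, d w = ⁅a, w⁆ := by
  -- bracket of basis vectors with b 0 and b 1
  have bx : ∀ k, ⁅b k, b 0⁆ = (lamN k : ℂ) • b k := by
    intro k
    rcases Nat.lt_or_ge k 2 with h | h
    · interval_cases k
      · simp [lamN]
      · have : ⁅b 1, b 0⁆ = -⁅b 0, b 1⁆ := (lie_skew _ _).symm
        simp [this, h8, lamN]
    · obtain ⟨i, hi⟩ : ∃ i, k = 3*i+2 ∨ k = 3*i+3 ∨ k = 3*i+4 := ⟨(k-2)/3, by omega⟩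
      rcases hi with rfl | rfl | rfl
      · rw [h2 i, lamN_32]; push_cast; ring_nf
      · rw [h3 i, lamN_33]
      · rw [h4 i, lamN_34]; push_cast; ring_nf
  have hby : ∀ k, ⁅b k, b 1⁆ = ((muZ k : ℤ) : ℂ) • b k := by
    intro k
    rcases Nat.lt_or_ge k 2 with h | h
    · interval_cases k
      · simp [h8, muZ]
      · simp [muZ]
    · obtain ⟨i, hi⟩ : ∃ i, k = 3*i+2 ∨ k = 3*i+3 ∨ k = 3*i+4 := ⟨(k-2)/3, by omega⟩
      rcases hi with rfl | rfl | rfl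
      · rw [h5 i, muZ_32]; push_cast; module
      · rw [h6 i, muZ_33]; push_cast; module
      · rw [h7 i, muZ_34]; push_cast; module
  -- coefficient of brackets with b 0 / b 1
  have reprX : ∀ (w : L) (k : ℕ), b.repr ⁅w, b 0⁆ k = (lamN k : ℂ) * b.repr w k := by
    intro w k
    have key : (b.coord k).comp (LieAlgebra.ad ℂ L (b 0))
        = -((lamN k : ℂ) • b.coord k) := by
      apply b.ext
      intro m
      have : ⁅b 0, b m⁆ = -⁅b m, b 0⁆ := (lie_skew _ _).symm
      simp [LieAlgebra.ad_apply, this, bx m, Module.Basis.coord_apply, Finsupp.single_apply]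
      by_cases hmk : m = k <;> simp [hmk, Finsupp.single_apply]
    have hk := LinearMap.congr_fun key w
    simp only [LinearMap.comp_apply, LieHom.coe_toLinearMap, LieAlgebra.ad_apply,
      LinearMap.neg_apply, LinearMap.smul_apply, Module.Basis.coord_apply, smul_eq_mul] at hk
    have : ⁅w, b 0⁆ = -⁅b 0, w⁆ := (lie_skew _ _).symm
    rw [this, map_neg, Finsupp.neg_apply, hk, neg_neg]
  have reprY : ∀ (w : L) (k : ℕ), b.repr ⁅w, b 1⁆ k = ((muZ k : ℤ) : ℂ) * b.repr w k := by
    intro w k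
    have key : (b.coord k).comp (LieAlgebra.ad ℂ L (b 1))
        = -(((muZ k : ℤ) : ℂ) • b.coord k) := by
      apply b.ext
      intro m
      have : ⁅b 1, b m⁆ = -⁅b m, b 1⁆ := (lie_skew _ _).symm
      simp [LieAlgebra.ad_apply, this, hby m, Module.Basis.coord_apply, Finsupp.single_apply]
      by_cases hmk : m = k <;> simp [hmk, Finsupp.single_apply]
    have hk := LinearMap.congr_fun key w
    simp only [LinearMap.comp_apply, LieHom.coe_toLinearMap, LieAlgebra.ad_apply,
      LinearMap.neg_apply, LinearMap.smul_apply, Module.Basis.coord_apply, smul_eq_mul] at hk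
    have : ⁅w, b 1⁆ = -⁅b 1, w⁆ := (lie_skew _ _).symm
    rw [this, map_neg, Finsupp.neg_apply, hk, neg_neg]
  -- expansion lemmas
  have exp1 : ∀ (w : L) (k : ℕ), (∀ m, m ≠ k → b.repr w m = 0) → w = b.repr w k • b k := by
    intro w k hw
    apply b.repr.injective
    ext m
    rw [map_smul, b.repr_self]
    by_cases hmk : m = k
    · subst hmk; simp
    · simp [Finsupp.single_apply, Ne.symm hmk, hw m hmk]
  have exp2 : ∀ w : L, (∀ m, 2 ≤ m → b.repr w m = 0) →
      w = b.repr w 0 • b 0 + b.repr w 1 • b 1 := by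
    intro w hw
    apply b.repr.injective
    ext m
    rw [map_add, map_smul, map_smul, b.repr_self, b.repr_self]
    match m with
    | 0 => simp
    | 1 => simp
    | (n+2) => simp [Finsupp.single_apply, hw (n+2) (by omega)]
  constructor
  · -- center is trivial
    rw [LieSubmodule.eq_bot_iff]
    intro z hz
    rw [LieAlgebra.center, LieModule.mem_maxTrivSubmodule] at hz
    have hz0 : ⁅z, b 0⁆ = 0 := by rw [← neg_eq_zero, lie_skew, hz (b 0)]
    have hz1 : ⁅z, b 1⁆ = 0 := by rw [← neg_eq_zero, lie_skew, hz (b 1)]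
    have hcoef : ∀ m, 2 ≤ m → b.repr z m = 0 := by
      intro m hm
      have e1 : (lamN m : ℂ) * b.repr z m = 0 := by rw [← reprX z m, hz0]; simp
      have e2 : ((muZ m : ℤ) : ℂ) * b.repr z m = 0 := by rw [← reprY z m, hz1]; simp
      rcases weight_ne m hm with h | h
      · exact (mul_eq_zero.mp e1).resolve_left (by exact_mod_cast h)
      · exact (mul_eq_zero.mp e2).resolve_left (by exact_mod_cast h)
    have hzx := exp2 z hcoef
    set r0 := b.repr z 0 with hr0
    set r1 := b.repr z 1 with hr1
    have k2 : (0:L) = (r0 - r1) • b 2 := by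
      have h := hz (b 2)
      rw [hzx, lie_add, lie_smul, lie_smul, bx 2, hby 2] at h
      rw [← h]
      norm_num [lamN, muZ]
      all_goals module
    have k3 : (0:L) = r1 • b 3 := by
      have h := hz (b 3)
      rw [hzx, lie_add, lie_smul, lie_smul, bx 3, hby 3] at h
      rw [← h]
      norm_num [lamN, muZ]
    have hr1z : r1 = 0 := by
      rcases smul_eq_zero.mp k3.symm with h | h
      · exact h
      · exact absurd h (b.ne_zero 3)
    have hr0z : r0 = 0 := by
      rcases smul_eq_zero.mp k2.symm with h | h
      · have : r0 = r1 := by linear_combination h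
        rw [this, hr1z]
      · exact absurd h (b.ne_zero 2)
    rw [hzx, hr0z, hr1z]
    simp
  · intro d
    set α := b.repr (d (b 0)) with hα
    set β := b.repr (d (b 1)) with hβ
    have F1 : ∀ k, ((muZ k : ℤ) : ℂ) * α k = (lamN k : ℂ) * β k := by
      intro k
      have h0 := d.apply_lie_eq_add (b 0) (b 1)
      rw [h8, map_zero,
        show ⁅b 0, d (b 1)⁆ = -⁅d (b 1), b 0⁆ from (lie_skew _ _).symm] at h0
      have h0' := congrArg (fun w => b.repr w k) h0
      simp only [map_zero, map_add, map_neg, Finsupp.coe_zero, Pi.zero_apply,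
        Finsupp.add_apply, Finsupp.neg_apply, reprX, reprY] at h0'
      linear_combination -h0'
    set γf : ℕ → ℂ := fun k =>
      if (lamN k : ℂ) ≠ 0 then α k / (lamN k : ℂ)
      else if ((muZ k : ℤ) : ℂ) ≠ 0 then β k / ((muZ k : ℤ) : ℂ) else 0 with hγf
    have hγsup : ∀ k, γf k ≠ 0 → k ∈ α.support ∪ β.support := by
      intro k h
      rw [Finset.mem_union, Finsupp.mem_support_iff, Finsupp.mem_support_iff]
      by_contra hc
      push_neg at hc
      apply h
      simp only [hγf, hc.1, hc.2, zero_div]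
      split_ifs <;> rfl
    set γ : ℕ →₀ ℂ := Finsupp.onFinset _ γf hγsup with hγ
    set a₂ : L := b.repr.symm γ with ha₂
    have hra₂ : b.repr a₂ = γ := b.repr.apply_symm_apply γ
    have hγl : ∀ k, 2 ≤ k → (lamN k : ℂ) * γ k = α k := by
      intro k hk
      have hgk : γ k = if (lamN k : ℂ) ≠ 0 then α k / (lamN k : ℂ)
          else if ((muZ k : ℤ) : ℂ) ≠ 0 then β k / ((muZ k : ℤ) : ℂ) else 0 := rfl
      rw [hgk]
      split_ifs with hl hm
      · field_simp
      · push_neg at hl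
        have hf := F1 k
        rw [hl, zero_mul] at hf
        have hα0 : α k = 0 := (mul_eq_zero.mp hf).resolve_left hm
        rw [hl, zero_mul, hα0]
      · exfalso
        push_neg at hl hm
        rcases weight_ne k hk with h | h
        · exact h (by exact_mod_cast hl)
        · exact h (by exact_mod_cast hm)
    have hγm : ∀ k, 2 ≤ k → ((muZ k : ℤ) : ℂ) * γ k = β k := by
      intro k hk
      have hgk : γ k = if (lamN k : ℂ) ≠ 0 then α k / (lamN k : ℂ)
          else if ((muZ k : ℤ) : ℂ) ≠ 0 then β k / ((muZ k : ℤ) : ℂ) else 0 := rfl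
      rw [hgk]
      split_ifs with hl hm
      · field_simp
        linear_combination (F1 k)
      · field_simp
      · exfalso
        push_neg at hl hm
        rcases weight_ne k hk with h | h
        · exact h (by exact_mod_cast hl)
        · exact h (by exact_mod_cast hm)
    set d' : LieDerivation ℂ L L := d - LieDerivation.ad ℂ L a₂ with hd'
    have d'app : ∀ w, d' w = d w - ⁅a₂, w⁆ := by
      intro w
      rw [hd', LieDerivation.sub_apply]
      simp
    have hd'0 : ∀ m, 2 ≤ m → b.repr (d' (b 0)) m = 0 := by
      intro m hm
      rw [d'app, map_sub, Finsupp.sub_apply, reprX, hra₂, hγl m hm]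
      exact sub_self _
    have hd'1 : ∀ m, 2 ≤ m → b.repr (d' (b 1)) m = 0 := by
      intro m hm
      rw [d'app, map_sub, Finsupp.sub_apply, reprY, hra₂, hγm m hm]
      exact sub_self _
    set s := b.repr (d' (b 0)) 0 with hs
    set t := b.repr (d' (b 0)) 1 with ht
    set s' := b.repr (d' (b 1)) 0 with hs'
    set t' := b.repr (d' (b 1)) 1 with ht'
    have e0 : d' (b 0) = s • b 0 + t • b 1 := exp2 _ hd'0
    have e1 : d' (b 1) = s' • b 0 + t' • b 1 := exp2 _ hd'1
    have main : ∀ k, 2 ≤ k → ∀ m, (lamN k : ℂ) * b.repr (d' (b k)) m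
        = (s * (lamN k : ℂ) + t * ((muZ k : ℤ) : ℂ)) * (if k = m then 1 else 0)
          + (lamN m : ℂ) * b.repr (d' (b k)) m := by
      intro k hk m
      have hk1 := d'.apply_lie_eq_add (b k) (b 0)
      rw [bx k, map_smul, e0, lie_add, lie_smul, lie_smul, bx k, hby k] at hk1
      have hh := congrArg (fun w => b.repr w m) hk1
      simp only [map_add, map_smul, Finsupp.add_apply, Finsupp.smul_apply, smul_eq_mul,
        reprX, b.repr_self, Finsupp.single_apply] at hh
      linear_combination hh
    have main' : ∀ k, 2 ≤ k → ∀ m, ((muZ k : ℤ) : ℂ) * b.repr (d' (b k)) m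
        = (s' * (lamN k : ℂ) + t' * ((muZ k : ℤ) : ℂ)) * (if k = m then 1 else 0)
          + ((muZ m : ℤ) : ℂ) * b.repr (d' (b k)) m := by
      intro k hk m
      have hk1 := d'.apply_lie_eq_add (b k) (b 1)
      rw [hby k, map_smul, e1, lie_add, lie_smul, lie_smul, bx k, hby k] at hk1
      have hh := congrArg (fun w => b.repr w m) hk1
      simp only [map_add, map_smul, Finsupp.add_apply, Finsupp.smul_apply, smul_eq_mul,
        reprY, b.repr_self, Finsupp.single_apply] at hh
      linear_combination hh
    have st0 : ∀ k, 2 ≤ k → s * (lamN k : ℂ) + t * ((muZ k : ℤ) : ℂ) = 0 := by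
      intro k hk
      have h := main k hk k
      rw [if_pos rfl, mul_one] at h
      linear_combination -h
    have st0' : ∀ k, 2 ≤ k → s' * (lamN k : ℂ) + t' * ((muZ k : ℤ) : ℂ) = 0 := by
      intro k hk
      have h := main' k hk k
      rw [if_pos rfl, mul_one] at h
      linear_combination -h
    have htz : t = 0 := by
      have h := st0 3 (by norm_num)
      norm_num [show lamN 3 = 0 from rfl, show muZ 3 = 1 from rfl] at h
      exact h
    have hsz : s = 0 := by
      have h := st0 2 (by norm_num)
      norm_num [show lamN 2 = 1 from rfl, show muZ 2 = -1 from rfl, htz] at h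
      exact h
    have htz' : t' = 0 := by
      have h := st0' 3 (by norm_num)
      norm_num [show lamN 3 = 0 from rfl, show muZ 3 = 1 from rfl] at h
      exact h
    have hsz' : s' = 0 := by
      have h := st0' 2 (by norm_num)
      norm_num [show lamN 2 = 1 from rfl, show muZ 2 = -1 from rfl, htz'] at h
      exact h
    have e0' : d' (b 0) = 0 := by rw [e0, hsz, htz]; simp
    have e1' : d' (b 1) = 0 := by rw [e1, hsz', htz']; simp
    have diagrepr : ∀ k, 2 ≤ k → ∀ m, m ≠ k → b.repr (d' (b k)) m = 0 := by
      intro k hk m hmk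
      have ha := main k hk m
      have hb := main' k hk m
      rw [if_neg (fun h => hmk h.symm), mul_zero, zero_add] at ha hb
      by_contra hE
      have hl : lamN k = lamN m := by exact_mod_cast mul_right_cancel₀ hE ha
      have hmu : muZ k = muZ m := by exact_mod_cast mul_right_cancel₀ hE hb
      rcases Nat.lt_or_ge m 2 with hm2 | hm2
      · have hzz : lamN m = 0 ∧ muZ m = 0 := by interval_cases m <;> exact ⟨rfl, rfl⟩
        rcases weight_ne k hk with h | h
        · exact h (hl.trans hzz.1)
        · exact h (hmu.trans hzz.2)
      · exact hmk (weight_inj hm2 hk hl.symm hmu.symm)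
    set c : ℕ → ℂ := fun k => b.repr (d' (b k)) k with hc
    have diag : ∀ k, 2 ≤ k → d' (b k) = c k • b k := fun k hk => exp1 _ k (diagrepr k hk)
    have addc : ∀ i j : ℕ, i % 3 ≠ j % 3 → c (i + j + 3) = c (i + 2) + c (j + 2) := by
      intro i j hij
      have hcc : (cc (i + 1) (j + 1) : ℂ) ≠ 0 := by
        have hv : cc (i + 1) (j + 1) = 1 ∨ cc (i + 1) (j + 1) = -1 := by
          unfold cc
          split_ifs with ha hb
          · exact Or.inl rfl
          · exact Or.inr rfl
          · exfalso; omega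
        rcases hv with h | h <;> rw [h] <;> norm_num
      have hk1 := d'.apply_lie_eq_add (b (i + 2)) (b (j + 2))
      rw [h1 i j, map_smul, diag (i + 2) (by omega), diag (j + 2) (by omega),
        diag (i + j + 3) (by omega), lie_smul, smul_lie, h1 i j] at hk1
      have hh := congrArg (fun w => b.repr w (i + j + 3)) hk1
      simp only [map_smul, map_add, Finsupp.add_apply, Finsupp.smul_apply, smul_eq_mul,
        b.repr_self, Finsupp.single_eq_same, mul_one] at hh
      have hh2 : (cc (i + 1) (j + 1) : ℂ) * c (i + j + 3)
          = (cc (i + 1) (j + 1) : ℂ) * (c (i + 2) + c (j + 2)) := by linear_combination hh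
      exact mul_left_cancel₀ hcc hh2
    have final : ∀ k, 2 ≤ k → c k = (c 2 + c 3) * (lamN k : ℂ) + c 3 * ((muZ k : ℤ) : ℂ) := by
      intro k
      induction k using Nat.strong_induction_on with
      | _ k IH =>
        intro hk
        rcases Nat.lt_or_ge k 4 with h4 | h4
        · interval_cases k
          · norm_num [show lamN 2 = 1 from rfl, show muZ 2 = -1 from rfl]
          · norm_num [show lamN 3 = 0 from rfl, show muZ 3 = 1 from rfl]
        · by_cases h3 : k % 3 = 0
          · have hsplit := addc 1 (k - 4) (by omega)
            rw [show 1 + (k - 4) + 3 = k by omega, show (k - 4) + 2 = k - 2 by omega] at hsplit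
            have hw := wadd3 k h4 h3
            have IH2 := IH (k - 2) (by omega) (by omega)
            rw [hsplit, IH2, hw.1, hw.2,
              show c (1 + 2) = c 3 by norm_num]
            push_cast
            ring
          · have hsplit := addc 0 (k - 3) (by omega)
            rw [show 0 + (k - 3) + 3 = k by omega, show (k - 3) + 2 = k - 1 by omega] at hsplit
            have hw := wadd2 k h4 h3
            have IH2 := IH (k - 1) (by omega) (by omega)
            rw [hsplit, IH2, hw.1, hw.2,
              show c (0 + 2) = c 2 by norm_num]
            push_cast
            ring
    refine ⟨a₂ - (c 2 + c 3) • b 0 - c 3 • b 1, ?_⟩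
    have habk : ∀ k, d (b k) = ⁅a₂ - (c 2 + c 3) • b 0 - c 3 • b 1, b k⁆ := by
      intro k
      have e01 : ⁅b 0, b k⁆ = -⁅b k, b 0⁆ := (lie_skew _ _).symm
      have e11 : ⁅b 1, b k⁆ = -⁅b k, b 1⁆ := (lie_skew _ _).symm
      have expand : ⁅a₂ - (c 2 + c 3) • b 0 - c 3 • b 1, b k⁆
          = ⁅a₂, b k⁆ + (c 2 + c 3) • ⁅b k, b 0⁆ + c 3 • ⁅b k, b 1⁆ := by
        rw [sub_lie, sub_lie, smul_lie, smul_lie, e01, e11]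
        module
      have hdd : d (b k) = d' (b k) + ⁅a₂, b k⁆ := by
        rw [d'app]
        abel
      rw [expand, bx k, hby k, hdd]
      rcases Nat.lt_or_ge k 2 with hk2 | hk2
      · interval_cases k
        · rw [e0']
          norm_num [show lamN 0 = 0 from rfl, show muZ 0 = 0 from rfl]
        · rw [e1']
          norm_num [show lamN 1 = 0 from rfl, show muZ 1 = 0 from rfl]
      · rw [diag k hk2, final k hk2]
        module
    intro w
    have hlin : (d : L →ₗ[ℂ] L) = LieAlgebra.ad ℂ L (a₂ - (c 2 + c 3) • b 0 - c 3 • b 1) := by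
      apply b.ext
      intro k
      rw [LieAlgebra.ad_apply]
      exact habk k
    have := LinearMap.congr_fun hlin w
    rw [LieAlgebra.ad_apply] at this
    exact this
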